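/- Let G be a finite group, H ≤ G a subgroup, and let C_1, …, C_k denote the non-identity conjugacy classes of G. Then D_H ≤ Σ_{i=1}^k |C_i ∩ H| · |C_i|^{-1/2}. -/

import Mathlib

open CategoryTheory Finset
open scoped Classical

/-- `D_H`: the total variation distance between the weak quantum Fourier sampling
distributions for the hidden subgroup `H` and for the trivial subgroup, namely
`(1/|G|) · Σ_ρ d_ρ · |Σ_{h ∈ H, h ≠ e} χ_ρ(h)|`, where `ρ` runs over the family
of irreducible representations. -/
noncomputable def weakDist {G : Type} [Group G] [Fintype G] {ι : Type} [Fintype ι]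
    (ρ : ι → FDRep ℂ G) (H : Subgroup G) : ℝ :=
  (Fintype.card G : ℝ)⁻¹ *
    ∑ i : ι, (Module.finrank ℂ (ρ i) : ℝ) *
      ‖∑ h ∈ Finset.univ.filter (fun h : G => h ∈ H ∧ h ≠ 1), (ρ i).character h‖

/-- `ρ : ι → FDRep ℂ G` is a complete family of pairwise non-isomorphic irreducible
complex representations of `G` (one per isomorphism class). -/
def IsCompleteIrrepFamily {G : Type} [Group G] {ι : Type} (ρ : ι → FDRep ℂ G) : Prop :=
  (∀ i, Simple (ρ i)) ∧
  (∀ i j, Nonempty (ρ i ≅ ρ j) → i = j) ∧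
  (∀ V : FDRep ℂ G, Simple V → ∃ i, Nonempty (ρ i ≅ V))

lemma real_pow_eq_one {x : ℝ} (hx : 0 ≤ x) {n : ℕ} (hn : 0 < n) (h : x ^ n = 1) : x = 1 := by
  rcases lt_trichotomy x 1 with h1 | h1 | h1
  · exact absurd h (by nlinarith [pow_lt_one₀ hx h1 hn.ne'])
  · exact h1
  · exact absurd h (by nlinarith [one_lt_pow₀ h1 hn.ne'])

lemma conj_eq_pow {μ : ℂ} {n : ℕ} (hn : 0 < n) (h : μ ^ n = 1) :
    (starRingEnd ℂ) μ = μ ^ (n - 1) := by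
  have hns : Complex.normSq μ = 1 := by
    have : Complex.normSq μ ^ n = 1 := by
      rw [← map_pow, h, map_one]
    exact real_pow_eq_one (Complex.normSq_nonneg μ) hn this
  have h1 : (starRingEnd ℂ) μ * μ = 1 := by
    have := Complex.normSq_eq_conj_mul_self (z := μ)
    rw [hns] at this
    exact_mod_cast this.symm
  have h2 : μ ^ (n - 1) * μ = 1 := by
    rw [← pow_succ, Nat.sub_add_cancel hn, h]
  have hμ : μ ≠ 0 := by
    rintro rfl; simp [zero_pow hn.ne'] at h
  have := mul_right_cancel₀ hμ (h1.trans h2.symm)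
  exact this

lemma exists_eigenbasis {V : Type} [AddCommGroup V] [Module ℂ V] [FiniteDimensional ℂ V]
    (f : Module.End ℂ V) {n : ℕ} (hn : 0 < n) (hf : f ^ n = 1) :
    ∃ (κ : Type) (_ : Fintype κ) (b : Module.Basis κ ℂ V) (μ : κ → ℂ),
      ∀ i, f (b i) = μ i • b i := by
  have hsq : Squarefree (Polynomial.X ^ n - Polynomial.C (1 : ℂ)) :=
    (Polynomial.separable_X_pow_sub_C 1
      (by exact_mod_cast Nat.cast_ne_zero.mpr hn.ne') one_ne_zero).squarefree
  have haev : Polynomial.aeval f (Polynomial.X ^ n - Polynomial.C (1 : ℂ)) = 0 := by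
    simp [hf]
  have hss : f.IsSemisimple :=
    Module.End.isSemisimple_of_squarefree_aeval_eq_zero hsq haev
  have hsup : ⨆ μ : ℂ, f.eigenspace μ = ⊤ := by
    have h := Module.End.iSup_maxGenEigenspace_eq_top f
    simpa only [hss.isFinitelySemisimple.maxGenEigenspace_eq_eigenspace] using h
  have hint : DirectSum.IsInternal f.eigenspace :=
    DirectSum.isInternal_submodule_of_iSupIndep_of_iSup_eq_top
      f.eigenspaces_iSupIndep hsup
  let bs : ∀ μ : ℂ, Module.Basis (Module.Free.ChooseBasisIndex ℂ (f.eigenspace μ)) ℂ (f.eigenspace μ) :=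
    fun μ => Module.Free.chooseBasis ℂ (f.eigenspace μ)
  let b := hint.collectedBasis bs
  refine ⟨_, FiniteDimensional.fintypeBasisIndex b, b, fun j => j.1, fun j => ?_⟩
  have hmem : b j ∈ f.eigenspace j.1 := hint.collectedBasis_mem bs j
  exact (Module.End.mem_eigenspace_iff.mp hmem)

lemma trace_eq_sum_of_eigenbasis {V : Type} [AddCommGroup V] [Module ℂ V]
    [FiniteDimensional ℂ V] {κ : Type} [Fintype κ] (b : Module.Basis κ ℂ V) (μ : κ → ℂ)
    (g : Module.End ℂ V) (h : ∀ i, g (b i) = μ i • b i) :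
    LinearMap.trace ℂ V g = ∑ i, μ i := by
  rw [LinearMap.trace_eq_matrix_trace ℂ b]
  have hm : LinearMap.toMatrix b b g = Matrix.diagonal μ := by
    ext i j
    rw [LinearMap.toMatrix_apply, h j, map_smul]
    rcases eq_or_ne i j with rfl | hij
    · simp [Module.Basis.repr_self, Matrix.diagonal]
    · simp [Module.Basis.repr_self, Finsupp.single_apply, Matrix.diagonal, hij, Ne.symm hij]
  rw [hm, Matrix.trace_diagonal]

lemma char_inv_eq_conj {G : Type} [Group G] [Fintype G] (V : FDRep ℂ G) (g : G) :
    V.character g⁻¹ = (starRingEnd ℂ) (V.character g) := by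
  set n := orderOf g with hn
  have hnpos : 0 < n := orderOf_pos g
  set f : Module.End ℂ V := V.ρ g with hfdef
  have hf : f ^ n = 1 := by
    rw [hfdef, ← map_pow, pow_orderOf_eq_one, map_one]
  obtain ⟨κ, _, b, μ, hb⟩ := exists_eigenbasis f hnpos hf
  have hpow : ∀ (k : ℕ) (i : κ), (f ^ k) (b i) = μ i ^ k • b i := by
    intro k i
    induction k with
    | zero => simp
    | succ k ih =>
      rw [pow_succ, Module.End.mul_apply, hb i, map_smul, ih, smul_smul, pow_succ]
      ring_nf
  have hμn : ∀ i, μ i ^ n = 1 := by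
    intro i
    have h1 : (f ^ n) (b i) = μ i ^ n • b i := hpow n i
    rw [hf] at h1
    have h2 : (1 : ℂ) • b i = μ i ^ n • b i := by simpa using h1
    have := sub_eq_zero.mpr h2
    rw [← sub_smul] at this
    rcases smul_eq_zero.mp this with h | h
    · linear_combination -h
    · exact absurd h (b.ne_zero i)
  have hinv : V.ρ g⁻¹ = f ^ (n - 1) := by
    have : g⁻¹ = g ^ (n - 1) := by
      symm
      apply eq_inv_of_mul_eq_one_left
      rw [← pow_succ, Nat.sub_add_cancel hnpos, hn, pow_orderOf_eq_one]
    rw [this, map_pow, hfdef]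
  show LinearMap.trace ℂ V (V.ρ g⁻¹) = (starRingEnd ℂ) (LinearMap.trace ℂ V (V.ρ g))
  rw [hinv, trace_eq_sum_of_eigenbasis b (fun i => μ i ^ (n-1)) _ (fun i => hpow (n-1) i),
    ← hfdef, trace_eq_sum_of_eigenbasis b μ f hb, map_sum]
  exact Finset.sum_congr rfl fun i _ => (conj_eq_pow hnpos (hμn i)).symm

section Main
variable {G : Type} [Group G] [Fintype G] {ι : Type} [Fintype ι]

lemma char_orthog (ρ : ι → FDRep ℂ G) (hρ : IsCompleteIrrepFamily ρ) (i j : ι) :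
    ∑ g : G, (ρ j).character g * (ρ i).character g⁻¹
      = if i = j then (Fintype.card G : ℂ) else 0 := by
  haveI := hρ.1 i
  haveI := hρ.1 j
  have inst : Invertible (Fintype.card G : ℂ) :=
    invertibleOfNonzero (Nat.cast_ne_zero.mpr Fintype.card_ne_zero)
  have h := FDRep.char_orthonormal (ρ j) (ρ i)
  have h' : ⅟(Fintype.card G : ℂ) • ∑ g : G, (ρ j).character g * (ρ i).character g⁻¹
      = if Nonempty (ρ j ≅ ρ i) then 1 else 0 := by
    rw [Nat.card_eq_fintype_card] at h; rw [smul_eq_mul, invOf_eq_inv]; exact h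
  have key : (∑ g : G, (ρ j).character g * (ρ i).character g⁻¹)
      = (Fintype.card G : ℂ) * (if Nonempty (ρ j ≅ ρ i) then 1 else 0) := by
    rw [← h', smul_eq_mul, ← mul_assoc, mul_invOf_self, one_mul]
  rw [key]
  rcases eq_or_ne i j with rfl | hij
  · rw [if_pos ⟨Iso.refl _⟩, if_pos rfl, mul_one]
  · rw [if_neg, if_neg hij, mul_zero]
    rintro ⟨e⟩
    exact hij (hρ.2.1 j i ⟨e⟩).symm

/-- Bessel-type bound: `∑_i |χ_i(g)|² ≤ |G| / |C(g)|`. -/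
lemma bessel_bound (ρ : ι → FDRep ℂ G) (hρ : IsCompleteIrrepFamily ρ) (g : G) :
    ∑ i : ι, ‖(ρ i).character g‖ ^ 2
      ≤ (Fintype.card G : ℝ) / (Nat.card (ConjClasses.mk g).carrier : ℝ) := by
  classical
  set N := Fintype.card G with hN
  have hNpos : (0:ℝ) < N := by exact_mod_cast Fintype.card_pos
  set u : ι → EuclideanSpace ℂ G :=
    fun i => WithLp.toLp 2 (fun h => (Real.sqrt N : ℂ)⁻¹ * (ρ i).character h) with hu
  have hmulself : ((Real.sqrt N : ℝ) : ℂ) * ((Real.sqrt N : ℝ) : ℂ) = (N : ℂ) := by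
    rw [← Complex.ofReal_mul, Real.mul_self_sqrt hNpos.le]
    norm_cast
  have huon : Orthonormal ℂ u := by
    rw [orthonormal_iff_ite]
    intro i j
    have hinner : (inner ℂ (u i) (u j) : ℂ) =
        (Real.sqrt N : ℂ)⁻¹ * (Real.sqrt N : ℂ)⁻¹ *
          ∑ h : G, (starRingEnd ℂ) ((ρ i).character h) * (ρ j).character h := by
      rw [PiLp.inner_apply, Finset.mul_sum]
      refine Finset.sum_congr rfl fun h _ => ?_
      simp only [hu, PiLp.toLp_apply, RCLike.inner_apply, map_mul, map_inv₀]
      rw [Complex.conj_ofReal]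
      ring
    have hsum : ∑ h : G, (starRingEnd ℂ) ((ρ i).character h) * (ρ j).character h
        = if i = j then (N : ℂ) else 0 := by
      have e : ∀ h : G, (starRingEnd ℂ) ((ρ i).character h) * (ρ j).character h
          = (ρ j).character h * (ρ i).character h⁻¹ := fun h => by
        rw [char_inv_eq_conj]; ring
      rw [Finset.sum_congr rfl (fun h _ => e h)]
      exact char_orthog ρ hρ i j
    rw [hinner, hsum]
    rcases eq_or_ne i j with rfl | hij
    · rw [if_pos rfl, if_pos rfl, ← mul_inv, hmulself, inv_mul_cancel₀]
      exact_mod_cast hNpos.ne'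
    · rw [if_neg hij, if_neg hij, mul_zero]
  set C : Finset G := Finset.univ.filter (fun h => ConjClasses.mk h = ConjClasses.mk g) with hC
  have hCcard : (Nat.card (ConjClasses.mk g).carrier : ℝ) = (C.card : ℝ) := by
    congr 1
    rw [Nat.card_coe_set_eq, Set.ncard_eq_toFinset_card']
    congr 1
    ext h
    simp [hC, ConjClasses.mem_carrier_iff_mk_eq]
  have hCpos : 0 < C.card := Finset.card_pos.mpr ⟨g, by simp [hC]⟩
  have hCc : (0:ℝ) < (C.card : ℝ) := by exact_mod_cast hCpos
  set x : EuclideanSpace ℂ G := WithLp.toLp 2 (fun h => if h ∈ C then (1:ℂ) else 0) with hx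
  have hxnorm : ‖x‖ ^ 2 = (C.card : ℝ) := by
    rw [EuclideanSpace.norm_eq, Real.sq_sqrt (by positivity)]
    rw [← Finset.sum_filter_add_sum_filter_not Finset.univ (fun h => h ∈ C)]
    have h1 : ∀ h ∈ Finset.univ.filter (fun h => h ∈ C), ‖x h‖ ^ 2 = 1 := by
      intro h hh; simp only [Finset.mem_filter] at hh; simp [hx, hh.2]
    have h2 : ∀ h ∈ Finset.univ.filter (fun h => ¬ h ∈ C), ‖x h‖ ^ 2 = 0 := by
      intro h hh; simp only [Finset.mem_filter] at hh; simp [hx, hh.2]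
    rw [Finset.sum_congr rfl h1, Finset.sum_congr rfl h2, Finset.sum_const,
      Finset.sum_const]
    simp [Finset.filter_univ_mem]
  have hinner : ∀ i, (inner ℂ (u i) x : ℂ)
      = (Real.sqrt N : ℂ)⁻¹ * (C.card : ℂ) * (starRingEnd ℂ) ((ρ i).character g) := by
    intro i
    rw [PiLp.inner_apply]
    have e : ∀ h : G, (starRingEnd ℂ) (u i h) * x h
        = if h ∈ C then (Real.sqrt N : ℂ)⁻¹ * (starRingEnd ℂ) ((ρ i).character h) else 0 := by
      intro h
      rcases em (h ∈ C) with hh | hh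
      · simp only [hx, PiLp.toLp_apply, hh, if_true, mul_one, hu, map_mul, map_inv₀, Complex.conj_ofReal]
      · simp [hx, hh]
    simp only [RCLike.inner_apply']
    rw [Finset.sum_congr rfl (fun h _ => e h), Finset.sum_ite_mem, Finset.univ_inter]
    have hconst : ∀ h ∈ C, (Real.sqrt N : ℂ)⁻¹ * (starRingEnd ℂ) ((ρ i).character h)
        = (Real.sqrt N : ℂ)⁻¹ * (starRingEnd ℂ) ((ρ i).character g) := by
      intro h hh
      simp only [hC, Finset.mem_filter] at hh
      obtain ⟨u', hu'⟩ := isConj_iff.mp (ConjClasses.mk_eq_mk_iff_isConj.mp hh.2).symm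
      rw [← hu', FDRep.char_conj]
    rw [Finset.sum_congr rfl hconst, Finset.sum_const]
    push_cast
    ring
  have hb := huon.sum_inner_products_le (s := Finset.univ) x
  rw [hxnorm] at hb
  have hterm : ∀ i, ‖(inner ℂ (u i) x : ℂ)‖ ^ 2
      = (C.card : ℝ)^2 / N * ‖(ρ i).character g‖ ^ 2 := by
    intro i
    rw [hinner i, norm_mul, norm_mul, Complex.norm_conj, norm_inv,
      Complex.norm_real, Complex.norm_natCast, Real.norm_of_nonneg (Real.sqrt_nonneg _)]
    rw [mul_pow, mul_pow, inv_pow, Real.sq_sqrt hNpos.le]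
    ring
  rw [Finset.sum_congr rfl (fun i _ => hterm i), ← Finset.mul_sum,
    div_mul_eq_mul_div, div_le_iff₀ hNpos] at hb
  rw [hCcard, le_div_iff₀ hCc]
  nlinarith [hb, hCc, hNpos]

lemma carrier_one : ∀ h : G, ConjClasses.mk h = ConjClasses.mk (1:G) ↔ h = 1 := by
  intro h
  rw [ConjClasses.mk_eq_mk_iff_isConj]
  constructor
  · intro hc
    obtain ⟨u, hu⟩ := isConj_iff.mp hc
    have : h = u⁻¹ * 1 * u := by
      rw [← hu]; group
    simpa using this
  · rintro rfl; exact IsConj.refl 1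

lemma class_bound (ρ : ι → FDRep ℂ G) (hρ : IsCompleteIrrepFamily ρ) (g : G) :
    (Fintype.card G : ℝ)⁻¹ *
      ∑ i : ι, (Module.finrank ℂ (ρ i) : ℝ) * ‖(ρ i).character g‖
      ≤ (Nat.card (ConjClasses.mk g).carrier : ℝ) ^ (-(1 / 2 : ℝ)) := by
  classical
  set N := Fintype.card G with hN
  have hNpos : (0:ℝ) < N := by exact_mod_cast Fintype.card_pos
  set cc : ℝ := (Nat.card (ConjClasses.mk g).carrier : ℝ) with hcc
  have hccpos : (0:ℝ) < cc := by
    have : Nat.card (ConjClasses.mk g).carrier ≠ 0 := by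
      have hne : Nonempty (ConjClasses.mk g).carrier := ⟨⟨g, ConjClasses.mem_carrier_mk⟩⟩
      have : 0 < Nat.card (ConjClasses.mk g).carrier :=
        Nat.card_pos (α := (ConjClasses.mk g).carrier)
      omega
    rw [hcc]
    exact_mod_cast Nat.pos_of_ne_zero this
  have hA : ∑ i : ι, (Module.finrank ℂ (ρ i) : ℝ) ^ 2 ≤ N := by
    have hb := bessel_bound ρ hρ (1 : G)
    have hcar1 : Nat.card (ConjClasses.mk (1:G)).carrier = 1 := by
      have : (ConjClasses.mk (1:G)).carrier = {(1:G)} := by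
        ext h
        simp [ConjClasses.mem_carrier_iff_mk_eq, carrier_one]
      rw [this, Nat.card_coe_set_eq, Set.ncard_singleton]
    rw [hcar1] at hb
    simp only [Nat.cast_one, div_one] at hb
    refine le_trans (le_of_eq ?_) hb
    refine Finset.sum_congr rfl fun i _ => ?_
    rw [FDRep.char_one]
    simp
  have hB := bessel_bound ρ hρ g
  rw [← hcc] at hB
  set S := ∑ i : ι, (Module.finrank ℂ (ρ i) : ℝ) * ‖(ρ i).character g‖ with hS
  have hSnn : 0 ≤ S := Finset.sum_nonneg fun i _ => by positivity
  have hCS := Finset.sum_mul_sq_le_sq_mul_sq Finset.univ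
    (fun i => (Module.finrank ℂ (ρ i) : ℝ)) (fun i => ‖(ρ i).character g‖)
  have hS2 : S ^ 2 ≤ N * (N / cc) := by
    calc S ^ 2 ≤ (∑ i : ι, (Module.finrank ℂ (ρ i) : ℝ) ^ 2) *
          ∑ i : ι, ‖(ρ i).character g‖ ^ 2 := hCS
      _ ≤ N * (N / cc) := by
          apply mul_le_mul hA hB (Finset.sum_nonneg fun i _ => by positivity) hNpos.le
  have hsc : (0:ℝ) < Real.sqrt cc := Real.sqrt_pos.mpr hccpos
  rw [Real.rpow_neg hccpos.le, ← Real.sqrt_eq_rpow]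
  rw [inv_mul_eq_div, ← one_div, div_le_div_iff₀ hNpos hsc]
  have hsq : Real.sqrt cc * Real.sqrt cc = cc := Real.mul_self_sqrt hccpos.le
  have hS2' : S ^ 2 * cc ≤ (N:ℝ) * N := by
    have h1 := mul_le_mul_of_nonneg_right hS2 hccpos.le
    rwa [mul_assoc, div_mul_cancel₀ _ hccpos.ne'] at h1
  nlinarith [hS2', hsc, hsq, hSnn, hNpos, hccpos, sq_nonneg (S * Real.sqrt cc - N)]

theorem stmt_1 {G : Type} [Group G] [Fintype G] {ι : Type} [Fintype ι]
    (ρ : ι → FDRep ℂ G) (hρ : IsCompleteIrrepFamily ρ) (H : Subgroup G) :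
    weakDist ρ H ≤
      ∑ c ∈ Finset.univ.filter (fun c : ConjClasses G => c ≠ ConjClasses.mk 1),
        (Nat.card (c.carrier ∩ (H : Set G) : Set G) : ℝ) *
          (Nat.card c.carrier : ℝ) ^ (-(1 / 2 : ℝ)) := by
  classical
  unfold weakDist
  set N := Fintype.card G with hN
  set T : Finset (ConjClasses G) := Finset.univ.filter (fun c => c ≠ ConjClasses.mk 1) with hT
  set S : Finset G := Finset.univ.filter (fun h : G => h ∈ H ∧ h ≠ 1) with hS
  have hout : ∀ c : ConjClasses G, ConjClasses.mk (Quotient.out c) = c := fun c => by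
    rw [← ConjClasses.quotient_mk_eq_mk]
    exact Quotient.out_eq c
  set d : ι → ℝ := fun i => (Module.finrank ℂ (ρ i) : ℝ) with hd
  set a : ι → ConjClasses G → ℝ :=
    fun i c => ‖(ρ i).character (Quotient.out c)‖ with ha
  set n : ConjClasses G → ℕ :=
    fun c => (S.filter (fun h => ConjClasses.mk h = c)).card with hn
  have hmaps : ∀ h ∈ S, ConjClasses.mk h ∈ T := by
    intro h hh
    simp only [hS, Finset.mem_filter, Finset.mem_univ, true_and] at hh
    simp only [hT, Finset.mem_filter, Finset.mem_univ, true_and]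
    intro hc
    exact hh.2 ((carrier_one h).mp hc)
  have hfib : ∀ (i : ι), ∀ c ∈ T,
      ∑ h ∈ S.filter (fun h => ConjClasses.mk h = c), (ρ i).character h
        = (n c : ℂ) * (ρ i).character (Quotient.out c) := by
    intro i c _
    have hcst : ∀ h ∈ S.filter (fun h => ConjClasses.mk h = c),
        (ρ i).character h = (ρ i).character (Quotient.out c) := by
      intro h hh
      simp only [Finset.mem_filter] at hh
      have hcj : IsConj (Quotient.out c) h := by
        rw [← ConjClasses.mk_eq_mk_iff_isConj, hout, hh.2]
      obtain ⟨u, hu⟩ := isConj_iff.mp hcj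
      rw [← hu, FDRep.char_conj]
    rw [Finset.sum_congr rfl hcst, Finset.sum_const, nsmul_eq_mul]
  have habs : ∀ i : ι, ‖∑ h ∈ S, (ρ i).character h‖
      ≤ ∑ c ∈ T, (n c : ℝ) * a i c := by
    intro i
    rw [← Finset.sum_fiberwise_of_maps_to hmaps ((ρ i).character)]
    refine le_trans (norm_sum_le _ _) (Finset.sum_le_sum ?_)
    intro c hc
    rw [hfib i c hc, norm_mul, Complex.norm_natCast, ha]
  have hncard : ∀ c ∈ T,
      (n c : ℝ) = (Nat.card (c.carrier ∩ (H : Set G) : Set G) : ℝ) := by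
    intro c hc
    simp only [hT, Finset.mem_filter, Finset.mem_univ, true_and] at hc
    have hset : (c.carrier ∩ (H : Set G)).toFinset
        = S.filter (fun h => ConjClasses.mk h = c) := by
      ext h
      simp only [Set.mem_toFinset, Set.mem_inter_iff, ConjClasses.mem_carrier_iff_mk_eq,
        Finset.mem_filter, hS, Finset.mem_univ, true_and, SetLike.mem_coe]
      constructor
      · rintro ⟨hmk, hH⟩
        refine ⟨⟨hH, ?_⟩, hmk⟩
        rintro rfl
        exact hc hmk.symm
      · rintro ⟨⟨hH, _⟩, hmk⟩
        exact ⟨hmk, hH⟩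
    rw [hn]
    congr 1
    rw [Nat.card_coe_set_eq, Set.ncard_eq_toFinset_card', hset]
  calc (N:ℝ)⁻¹ * ∑ i : ι, d i * ‖∑ h ∈ S, (ρ i).character h‖
      ≤ (N:ℝ)⁻¹ * ∑ i : ι, d i * ∑ c ∈ T, (n c : ℝ) * a i c := by
        refine mul_le_mul_of_nonneg_left (Finset.sum_le_sum fun i _ => ?_) (by positivity)
        exact mul_le_mul_of_nonneg_left (habs i) (by positivity)
    _ = ∑ c ∈ T, (n c : ℝ) * ((N:ℝ)⁻¹ * ∑ i : ι, d i * a i c) := by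
        simp_rw [Finset.mul_sum]
        rw [Finset.sum_comm]
        refine Finset.sum_congr rfl fun c _ => Finset.sum_congr rfl fun i _ => by ring
    _ ≤ ∑ c ∈ T, (Nat.card (c.carrier ∩ (H : Set G) : Set G) : ℝ) *
          (Nat.card c.carrier : ℝ) ^ (-(1 / 2 : ℝ)) := by
        refine Finset.sum_le_sum fun c hc => ?_
        rw [← hncard c hc]
        refine mul_le_mul_of_nonneg_left ?_ (by positivity)
        have hcb := class_bound ρ hρ (Quotient.out c)
        rw [hout c] at hcb
        exact hcb
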